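/- Regularity (non-vanishing current) lemma: let b ∈ (0, π/2) and E* < 4 − √8. There exists C = C(b, E*) > 0 such that for every ℓ²-normalized eigenfunction ψ of H_{Λ_L}(A) with eigenvalue E ∈ [0, E*], and every vector potential A whose flux through every plaquette of Λ_L lies in T_b, one has Σ_{a ∈ 𝒜_{Λ_L}} |J_ψ(a)|² ≥ C L^{−4}. -/

import Mathlib

open scoped Classical

/-- `x` and `y` are nearest neighbors in `ℤ²` (`|x - y| = 1`). -/
def edge (x y : ℤ × ℤ) : Prop := (x.1 - y.1) ^ 2 + (x.2 - y.2) ^ 2 = 1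

/-- The four nearest neighbors of a point of `ℤ²`. -/
def nbrs (x : ℤ × ℤ) : Finset (ℤ × ℤ) :=
  {x + (1, 0), x - (1, 0), x + (0, 1), x - (0, 1)}

/-- The finite-volume magnetic Schrödinger operator with simple boundary conditions:
`(H_Λ(A) ψ)(x) = 4 ψ(x) - Σ_{y ∈ Λ, |x-y|=1} e^{iA(x,y)} ψ(y)`. -/
noncomputable def Ham (Λ : Finset (ℤ × ℤ)) (A : ℤ × ℤ → ℤ × ℤ → ℝ)
    (ψ : ℤ × ℤ → ℂ) (x : ℤ × ℤ) : ℂ :=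
  4 * ψ x - ∑ y ∈ Λ.filter (fun y => edge x y), Complex.exp (Complex.I * (A x y)) * ψ y

/-- The current of a wavefunction `ψ` along the directed edge `(x,y)`:
`J_ψ(x,y) = -2 Re( conj(ψ x) · i e^{iA(x,y)} ψ y )`. -/
noncomputable def cur (A : ℤ × ℤ → ℤ × ℤ → ℝ) (ψ : ℤ × ℤ → ℂ) (x y : ℤ × ℤ) : ℝ :=
  -2 * ((starRingEnd ℂ) (ψ x) * Complex.I * Complex.exp (Complex.I * (A x y)) * ψ y).re

/-- The box `Λ_L = {x ∈ ℤ² : max(|x₁|, |x₂|) ≤ L}`. -/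
noncomputable def box (L : ℕ) : Finset (ℤ × ℤ) := Finset.Icc (-(L : ℤ), -(L : ℤ)) ((L : ℤ), (L : ℤ))

/-- The unit square (plaquette) with lower left corner `p`. -/
def squareF (p : ℤ × ℤ) : Finset (ℤ × ℤ) := {p, p + (1, 0), p + (0, 1), p + (1, 1)}

/-- The flux of the vector potential `A` through the plaquette with lower left corner
`p`: the sum of `A` over the four directed boundary edges. -/
def flux (A : ℤ × ℤ → ℤ × ℤ → ℝ) (p : ℤ × ℤ) : ℝ :=
  A p (p + (1, 0)) + A (p + (1, 0)) (p + (1, 1))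
    + A (p + (1, 1)) (p + (0, 1)) + A (p + (0, 1)) p

/-- `Tb b` : the set of angles (represented by real numbers, modulo `2π`) whose distance
to both `0` and `π` on the circle `ℝ/2πℤ` is at least `b`. -/
def Tb (b : ℝ) : Set ℝ := {θ : ℝ | ∀ n : ℤ, b ≤ |θ - n * Real.pi|}

set_option maxHeartbeats 1000000

lemma pair_add (x : ℤ × ℤ) (a b c d : ℤ) : x + (a, b) + (c, d) = x + (a + c, b + d) := by
  obtain ⟨x1,x2⟩ := x; simp [Prod.ext_iff]; constructor <;> ring

lemma pair_zero (x : ℤ × ℤ) : x + (0,0) = x := by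
  obtain ⟨x1,x2⟩ := x; simp [Prod.ext_iff]

lemma edge_cases {x y : ℤ × ℤ} (h : edge x y) :
    y = x + (1,0) ∨ y = x + (-1,0) ∨ y = x + (0,1) ∨ y = x + (0,-1) := by
  obtain ⟨x1,x2⟩ := x; obtain ⟨y1,y2⟩ := y
  simp only [edge] at h
  simp only [Prod.mk_add_mk, Prod.mk.injEq]
  have h1 : -1 ≤ x1 - y1 := by nlinarith [sq_nonneg (x1-y1+1), sq_nonneg (x2-y2)]
  have h2 : x1 - y1 ≤ 1 := by nlinarith [sq_nonneg (x1-y1-1), sq_nonneg (x2-y2)]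
  have h3 : -1 ≤ x2 - y2 := by nlinarith [sq_nonneg (x2-y2+1), sq_nonneg (x1-y1)]
  have h4 : x2 - y2 ≤ 1 := by nlinarith [sq_nonneg (x2-y2-1), sq_nonneg (x1-y1)]
  have h5 : x1 - y1 = 0 ∨ x2 - y2 = 0 := by
    by_contra hC
    push_neg at hC
    obtain ⟨hA, hB⟩ := hC
    have hA1 : 1 ≤ (x1-y1)^2 := by rcases lt_or_gt_of_ne hA with h'|h' <;> nlinarith
    have hB1 : 1 ≤ (x2-y2)^2 := by rcases lt_or_gt_of_ne hB with h'|h' <;> nlinarith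
    omega
  rcases h5 with h5|h5
  · rw [h5] at h; simp at h
    have h6 : x2 - y2 = 1 ∨ x2 - y2 = -1 := by
      rcases lt_trichotomy (x2-y2) 0 with h'|h'|h'
      · right; nlinarith
      · rw [h'] at h; simp at h
      · left; nlinarith
    omega
  · rw [h5] at h; simp at h
    have h6 : x1 - y1 = 1 ∨ x1 - y1 = -1 := by
      rcases lt_trichotomy (x1-y1) 0 with h'|h'|h'
      · right; nlinarith
      · rw [h'] at h; simp at h
      · left; nlinarith
    omega

lemma nbrs_eq (x : ℤ × ℤ) : nbrs x = {x+(1,0), x+(-1,0), x+(0,1), x+(0,-1)} := by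
  simp [nbrs, sub_eq_add_neg, Prod.ext_iff]

lemma sum_nbrs (f : ℤ × ℤ → ℝ) (x : ℤ × ℤ) :
    ∑ y ∈ nbrs x, f y = f (x+(1,0)) + f (x+(-1,0)) + f (x+(0,1)) + f (x+(0,-1)) := by
  rw [nbrs_eq]
  rw [Finset.sum_insert (by simp [Prod.ext_iff]),
      Finset.sum_insert (by simp [Prod.ext_iff]),
      Finset.sum_insert (by simp [Prod.ext_iff]), Finset.sum_singleton]
  ring

lemma im_mul_le (z w : ℂ) : |(z*w).im| ≤ |z.im| * ‖w‖ + ‖z‖ * |w.im| := by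
  rw [Complex.mul_im]
  refine (abs_add_le _ _).trans ?_
  rw [abs_mul, abs_mul]
  have := Complex.abs_re_le_norm z
  have := Complex.abs_im_le_norm z
  have := Complex.abs_re_le_norm w
  have := Complex.abs_im_le_norm w
  have := norm_nonneg z
  have := norm_nonneg w
  have := abs_nonneg z.re
  have := abs_nonneg z.im
  have := abs_nonneg w.re
  have := abs_nonneg w.im
  nlinarith

lemma sin_lb {b Φ : ℝ} (hb0 : 0 < b) (hbπ : b ≤ Real.pi/2)
    (h : ∀ n : ℤ, b ≤ |Φ - n*Real.pi|) : Real.sin b ≤ |Real.sin Φ| := by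
  have hπ := Real.pi_pos
  set n := round (Φ / Real.pi) with hn
  set x := Φ - n*Real.pi with hx
  have hr : |x| ≤ Real.pi/2 := by
    have h1 := abs_sub_round (Φ / Real.pi)
    have h2 : x = (Φ/Real.pi - n) * Real.pi := by rw [hx]; field_simp
    rw [h2, abs_mul, abs_of_pos hπ]
    calc |Φ/Real.pi - n| * Real.pi ≤ (1/2) * Real.pi := by gcongr
      _ = Real.pi/2 := by ring
  have hbx : b ≤ |x| := h n
  have hmono : Real.sin b ≤ Real.sin |x| := by
    apply Real.strictMonoOn_sin.monotoneOn ⟨by linarith, hbπ⟩ ⟨by linarith [abs_nonneg x], hr⟩ hbx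
  have habs : Real.sin |x| = |Real.sin x| := by
    rcases le_or_gt 0 x with h'|h'
    · rw [abs_of_nonneg h',
        abs_of_nonneg (Real.sin_nonneg_of_nonneg_of_le_pi h' (by rw [← abs_of_nonneg h']; linarith))]
    · have hs : Real.sin x ≤ 0 :=
        Real.sin_nonpos_of_nonpos_of_neg_pi_le h'.le (by rw [← neg_neg x, ← abs_of_neg h']; linarith)
      rw [abs_of_neg h', Real.sin_neg, abs_of_nonpos hs]
  have hper : Real.sin Φ = (-1)^n * Real.sin x := by
    have h7 := Real.sin_add_int_mul_pi x n
    have h8 : x + n*Real.pi = Φ := by rw [hx]; ring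
    rw [h8] at h7; exact h7
  have hone : |((-1:ℝ))^n| = 1 := by
    rcases Int.even_or_odd n with he|ho
    · rw [he.neg_one_zpow]; simp
    · rw [ho.neg_one_zpow]; simp
  rw [hper, abs_mul, hone, one_mul, ← habs]
  exact hmono

lemma exists_square (δ0 δ ε m : ℝ) (F : ℤ × ℤ → ℝ) (x0 : ℤ × ℤ)
    (hδδ : δ0 ≤ δ) (hδ4 : δ ≤ 4)
    (hm : 0 < m) (hFle : ∀ x, F x ≤ m) (hx0 : F x0 = m)
    (key : ∀ x, F x ≠ 0 → δ * F x ≤ F (x+(1,0)) + F (x+(-1,0)) + F (x+(0,1)) + F (x+(0,-1)))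
    (hε : 0 < ε) (hε1 : 2*ε ≤ δ0 - 2) (hεA : 9*ε ≤ δ0^2 - 8) (hεB : 7*ε ≤ δ0^2 - 2*δ0 - 2) :
    ∃ p, ∀ q ∈ squareF p, ε * m ≤ F q := by
  by_contra hcon
  push_neg at hcon
  have hδ02 : 2 < δ0 := by linarith
  have hδ0pos : 0 < δ0 := by linarith
  have hδpos : 0 < δ := by linarith
  have hδ04 : δ0 ≤ 4 := le_trans hδδ hδ4
  have hεle1 : ε ≤ 1 := by linarith
  have hεm1 : ε * m ≤ m := by nlinarith
  have hεmpos : 0 < ε * m := mul_pos hε hm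
  have hx0ne : F x0 ≠ 0 := by rw [hx0]; exact hm.ne'
  have hx0' : ε * m ≤ F x0 := by rw [hx0]; exact hεm1
  have notall : ∀ p, ε*m ≤ F p → ε*m ≤ F (p+(1,0)) → ε*m ≤ F (p+(0,1)) →
      ε*m ≤ F (p+(1,1)) → False := by
    intro p h1 h2 h3 h4
    obtain ⟨q, hq, hlt⟩ := hcon p
    simp only [squareF, Finset.mem_insert, Finset.mem_singleton] at hq
    rcases hq with rfl|rfl|rfl|rfl <;> linarith
  have hsum : δ * m ≤ F (x0+(1,0)) + F (x0+(-1,0)) + F (x0+(0,1)) + F (x0+(0,-1)) := by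
    have h := key x0 hx0ne
    rw [hx0] at h; exact h
  have h22m : (2+2*ε)*m ≤ δ*m := by nlinarith
  have hmono : (δ0^2 - 2*δ0) * m ≤ (δ^2 - 2*δ) * m := by
    nlinarith [mul_nonneg (mul_nonneg (sub_nonneg.2 hδδ) (show (0:ℝ) ≤ δ+δ0-2 by linarith)) hm.le]
  have hmono2 : δ0^2 * m ≤ δ^2 * m := by
    nlinarith [mul_nonneg (mul_nonneg (sub_nonneg.2 hδδ) (show (0:ℝ) ≤ δ+δ0 by linarith)) hm.le]
  have hδεm := mul_le_mul_of_nonneg_right hδ4 (mul_pos hε hm).le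
  have hεBm := mul_le_mul_of_nonneg_right hεB hm.le
  have hεAm := mul_le_mul_of_nonneg_right hεA hm.le
  rcases le_or_gt (ε*m) (F (x0+(1,0))) with ha|ha <;>
    rcases le_or_gt (ε*m) (F (x0+(-1,0))) with hb|hb <;>
    rcases le_or_gt (ε*m) (F (x0+(0,1))) with hc|hc <;>
    rcases le_or_gt (ε*m) (F (x0+(0,-1))) with hd|hd <;>
    first
    | linarith [hFle (x0+(1,0)), hFle (x0+(-1,0)), hFle (x0+(0,1)), hFle (x0+(0,-1))]
    | skip
  -- Case 1 : all four neighbors ≥ ε m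
  · have d1 : F (x0+(1,1)) < ε*m := by
      by_contra h'; push_neg at h'; exact notall x0 hx0' ha hc h'
    have d2 : F (x0+(-1,1)) < ε*m := by
      by_contra h'; push_neg at h'
      refine notall (x0+(-1,0)) hb ?_ ?_ ?_ <;> rw [pair_add] <;> norm_num [pair_zero]
      exacts [hx0', h', hc]
    have d3 : F (x0+(1,-1)) < ε*m := by
      by_contra h'; push_neg at h'
      refine notall (x0+(0,-1)) hd ?_ ?_ ?_ <;> rw [pair_add] <;> norm_num [pair_zero]
      exacts [h', hx0', ha]
    have d4 : F (x0+(-1,-1)) < ε*m := by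
      by_contra h'; push_neg at h'
      refine notall (x0+(-1,-1)) h' ?_ ?_ ?_ <;> rw [pair_add] <;> norm_num [pair_zero]
      exacts [hd, hb, hx0']
    have k1 := key (x0+(1,0)) (lt_of_lt_of_le hεmpos ha).ne'
    have k2 := key (x0+(-1,0)) (lt_of_lt_of_le hεmpos hb).ne'
    have k3 := key (x0+(0,1)) (lt_of_lt_of_le hεmpos hc).ne'
    have k4 := key (x0+(0,-1)) (lt_of_lt_of_le hεmpos hd).ne'
    simp only [pair_add] at k1 k2 k3 k4
    norm_num [pair_zero] at k1 k2 k3 k4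
    have hcomb : δ*(δ*m) ≤ (8+8*ε)*m := by
      linarith [mul_le_mul_of_nonneg_left hsum hδpos.le, k1, k2, k3, k4,
        hFle (x0+(2,0)), hFle (x0+(-2,0)), hFle (x0+(0,2)), hFle (x0+(0,-2)), hx0,
        d1, d2, d3, d4]
    linarith [hcomb, hmono2, hεAm, mul_pos hε hm]
  -- Case 2 : only d = F (x0+(0,-1)) small ; key at x0+(0,1)
  · have d1 : F (x0+(1,1)) < ε*m := by
      by_contra h'; push_neg at h'; exact notall x0 hx0' ha hc h'
    have d2 : F (x0+(-1,1)) < ε*m := by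
      by_contra h'; push_neg at h'
      refine notall (x0+(-1,0)) hb ?_ ?_ ?_ <;> rw [pair_add] <;> norm_num [pair_zero]
      exacts [hx0', h', hc]
    have hkey := key (x0+(0,1)) (lt_of_lt_of_le hεmpos hc).ne'
    simp only [pair_add] at hkey
    norm_num [pair_zero] at hkey
    have hlow : δ*m - m - m - ε*m ≤ F (x0+(0,1)) := by
      linarith [hsum, hFle (x0+(1,0)), hFle (x0+(-1,0))]
    have hmul := mul_le_mul_of_nonneg_left hlow hδpos.le
    have hup : δ * F (x0+(0,1)) ≤ (2+2*ε)*m := by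
      linarith [hkey, d1, d2, hFle (x0+(0,2)), hx0]
    linarith [hmul, hup, hmono, hδεm, hεBm, mul_pos hε hm]
  -- Case 3 : only c = F (x0+(0,1)) small ; key at x0+(0,-1)
  · have d1 : F (x0+(1,-1)) < ε*m := by
      by_contra h'; push_neg at h'
      refine notall (x0+(0,-1)) hd ?_ ?_ ?_ <;> rw [pair_add] <;> norm_num [pair_zero]
      exacts [h', hx0', ha]
    have d2 : F (x0+(-1,-1)) < ε*m := by
      by_contra h'; push_neg at h'
      refine notall (x0+(-1,-1)) h' ?_ ?_ ?_ <;> rw [pair_add] <;> norm_num [pair_zero]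
      exacts [hd, hb, hx0']
    have hkey := key (x0+(0,-1)) (lt_of_lt_of_le hεmpos hd).ne'
    simp only [pair_add] at hkey
    norm_num [pair_zero] at hkey
    have hlow : δ*m - m - m - ε*m ≤ F (x0+(0,-1)) := by
      linarith [hsum, hFle (x0+(1,0)), hFle (x0+(-1,0))]
    have hmul := mul_le_mul_of_nonneg_left hlow hδpos.le
    have hup : δ * F (x0+(0,-1)) ≤ (2+2*ε)*m := by
      linarith [hkey, d1, d2, hFle (x0+(0,-2)), hx0]
    linarith [hmul, hup, hmono, hδεm, hεBm, mul_pos hε hm]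
  -- Case 4 : only b = F (x0+(-1,0)) small ; key at x0+(1,0)
  · have d1 : F (x0+(1,1)) < ε*m := by
      by_contra h'; push_neg at h'; exact notall x0 hx0' ha hc h'
    have d2 : F (x0+(1,-1)) < ε*m := by
      by_contra h'; push_neg at h'
      refine notall (x0+(0,-1)) hd ?_ ?_ ?_ <;> rw [pair_add] <;> norm_num [pair_zero]
      exacts [h', hx0', ha]
    have hkey := key (x0+(1,0)) (lt_of_lt_of_le hεmpos ha).ne'
    simp only [pair_add] at hkey
    norm_num [pair_zero] at hkey
    have hlow : δ*m - m - m - ε*m ≤ F (x0+(1,0)) := by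
      linarith [hsum, hFle (x0+(0,1)), hFle (x0+(0,-1))]
    have hmul := mul_le_mul_of_nonneg_left hlow hδpos.le
    have hup : δ * F (x0+(1,0)) ≤ (2+2*ε)*m := by
      linarith [hkey, d1, d2, hFle (x0+(2,0)), hx0]
    linarith [hmul, hup, hmono, hδεm, hεBm, mul_pos hε hm]
  -- Case 5 : only a = F (x0+(1,0)) small ; key at x0+(-1,0)
  · have d1 : F (x0+(-1,1)) < ε*m := by
      by_contra h'; push_neg at h'
      refine notall (x0+(-1,0)) hb ?_ ?_ ?_ <;> rw [pair_add] <;> norm_num [pair_zero]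
      exacts [hx0', h', hc]
    have d2 : F (x0+(-1,-1)) < ε*m := by
      by_contra h'; push_neg at h'
      refine notall (x0+(-1,-1)) h' ?_ ?_ ?_ <;> rw [pair_add] <;> norm_num [pair_zero]
      exacts [hd, hb, hx0']
    have hkey := key (x0+(-1,0)) (lt_of_lt_of_le hεmpos hb).ne'
    simp only [pair_add] at hkey
    norm_num [pair_zero] at hkey
    have hlow : δ*m - m - m - ε*m ≤ F (x0+(-1,0)) := by
      linarith [hsum, hFle (x0+(0,1)), hFle (x0+(0,-1))]
    have hmul := mul_le_mul_of_nonneg_left hlow hδpos.le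
    have hup : δ * F (x0+(-1,0)) ≤ (2+2*ε)*m := by
      linarith [hkey, d1, d2, hFle (x0+(-2,0)), hx0]
    linarith [hmul, hup, hmono, hδεm, hεBm, mul_pos hε hm]

lemma key_ineq (L : ℕ) (A : ℤ × ℤ → ℤ × ℤ → ℝ) (ψ : ℤ × ℤ → ℂ) (E : ℝ)
    (hout : ∀ x ∉ box L, ψ x = 0)
    (heig : ∀ x ∈ box L, Ham (box L) A ψ x = (E : ℂ) * ψ x)
    (hE4 : E ≤ 4) :
    ∀ x, ψ x ≠ 0 → (4 - E) * ‖ψ x‖ ≤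
      ‖ψ (x+(1,0))‖ + ‖ψ (x+(-1,0))‖
        + ‖ψ (x+(0,1))‖ + ‖ψ (x+(0,-1))‖ := by
  intro x hx
  have hxbox : x ∈ box L := by
    by_contra h; exact hx (hout x h)
  have h := heig x hxbox
  simp only [Ham] at h
  have hS : ∑ y ∈ (box L).filter (fun y => edge x y), Complex.exp (Complex.I * (A x y)) * ψ y
      = ((4 - E : ℝ) : ℂ) * ψ x := by
    push_cast
    linear_combination -h
  have habs : (4 - E) * ‖ψ x‖
      = ‖∑ y ∈ (box L).filter (fun y => edge x y),
          Complex.exp (Complex.I * (A x y)) * ψ y‖ := by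
    rw [hS, norm_mul, Complex.norm_real, Real.norm_eq_abs, abs_of_nonneg (by linarith : (0:ℝ) ≤ 4 - E)]
  rw [habs]
  have h1 : ‖∑ y ∈ (box L).filter (fun y => edge x y),
        Complex.exp (Complex.I * (A x y)) * ψ y‖
      ≤ ∑ y ∈ (box L).filter (fun y => edge x y), ‖ψ y‖ := by
    refine (norm_sum_le _ _).trans_eq ?_
    refine Finset.sum_congr rfl fun y _ => ?_
    rw [norm_mul, mul_comm Complex.I, Complex.norm_exp_ofReal_mul_I, one_mul]
  have hsub : (box L).filter (fun y => edge x y) ⊆ nbrs x := by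
    intro y hy
    have he : edge x y := (Finset.mem_filter.mp hy).2
    rw [nbrs_eq]
    simp only [Finset.mem_insert, Finset.mem_singleton]
    rcases edge_cases he with h'|h'|h'|h' <;> tauto
  have h2 : ∑ y ∈ (box L).filter (fun y => edge x y), ‖ψ y‖
      ≤ ∑ y ∈ nbrs x, ‖ψ y‖ :=
    Finset.sum_le_sum_of_subset_of_nonneg hsub (fun y _ _ => norm_nonneg _)
  rw [sum_nbrs (fun q => ‖ψ q‖) x] at h2
  linarith

lemma card_box (L : ℕ) : (box L).card = (2*L+1) * (2*L+1) := by
  rw [box, Finset.Icc_prod_def, Finset.card_product]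
  simp only [Int.card_Icc]
  have : ((L:ℤ) - -(L:ℤ) + 1).toNat = 2*L+1 := by omega
  simp only [show (L:ℤ) + 1 - -(L:ℤ) = (L:ℤ) - -(L:ℤ) + 1 by ring, this]

lemma im_prod4_le (z1 z2 z3 z4 : ℂ) (t : ℝ) (ht : 0 ≤ t)
    (h1 : |z1.im| ≤ t * ‖z1‖) (h2 : |z2.im| ≤ t * ‖z2‖)
    (h3 : |z3.im| ≤ t * ‖z3‖) (h4 : |z4.im| ≤ t * ‖z4‖) :
    |(z1*z2*z3*z4).im| ≤ 4 * t *
      (‖z1‖ * ‖z2‖ * ‖z3‖ * ‖z4‖) := by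
  have a1 := norm_nonneg z1
  have a2 := norm_nonneg z2
  have a3 := norm_nonneg z3
  have a4 := norm_nonneg z4
  have n1 := abs_nonneg (z1.im)
  have h12abs : ‖z1*z2‖ = ‖z1‖ * ‖z2‖ := norm_mul _ _
  have h123abs : ‖z1*z2*z3‖ = ‖z1‖ * ‖z2‖ * ‖z3‖ := by
    rw [norm_mul, h12abs]
  have e12 : |(z1*z2).im| ≤ 2*t*(‖z1‖ * ‖z2‖) := by
    have hh := im_mul_le z1 z2
    nlinarith [mul_le_mul_of_nonneg_right h1 a2, mul_le_mul_of_nonneg_left h2 a1]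
  have e123 : |(z1*z2*z3).im| ≤ 3*t*(‖z1‖ * ‖z2‖ * ‖z3‖) := by
    have hh := im_mul_le (z1*z2) z3
    rw [h12abs] at hh
    nlinarith [mul_le_mul_of_nonneg_right e12 a3,
      mul_le_mul_of_nonneg_left h3 (mul_nonneg a1 a2)]
  have hh := im_mul_le (z1*z2*z3) z4
  rw [h123abs] at hh
  nlinarith [mul_le_mul_of_nonneg_right e123 a4,
    mul_le_mul_of_nonneg_left h4 (mul_nonneg (mul_nonneg a1 a2) a3)]

lemma cur_eq (A : ℤ × ℤ → ℤ × ℤ → ℝ) (ψ : ℤ × ℤ → ℂ) (x y : ℤ × ℤ) :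
    cur A ψ x y
      = 2 * ((starRingEnd ℂ) (ψ x) * Complex.exp (Complex.I * (A x y)) * ψ y).im := by
  simp only [cur]
  have h : (starRingEnd ℂ) (ψ x) * Complex.I * Complex.exp (Complex.I * (A x y)) * ψ y
      = Complex.I * ((starRingEnd ℂ) (ψ x) * Complex.exp (Complex.I * (A x y)) * ψ y) := by
    ring
  rw [h, Complex.I_mul_re]
  ring

lemma conj_self (w : ℂ) : (starRingEnd ℂ) w * w = ((‖w‖ ^ 2 : ℝ) : ℂ) := by
  rw [mul_comm, Complex.mul_conj, Complex.normSq_eq_norm_sq]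

lemma prod_cycle (w1 w2 w3 w4 : ℂ) (A1 A2 A3 A4 : ℝ) :
    ((starRingEnd ℂ) w1 * Complex.exp (Complex.I * A1) * w2)
      * ((starRingEnd ℂ) w2 * Complex.exp (Complex.I * A2) * w3)
      * ((starRingEnd ℂ) w3 * Complex.exp (Complex.I * A3) * w4)
      * ((starRingEnd ℂ) w4 * Complex.exp (Complex.I * A4) * w1)
    = ((‖w1‖ ^ 2 * ‖w2‖ ^ 2 * ‖w3‖ ^ 2 * ‖w4‖ ^ 2 : ℝ) : ℂ)
        * Complex.exp (Complex.I * ((A1+A2+A3+A4 : ℝ) : ℂ)) := by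
  have e : Complex.I * ((A1+A2+A3+A4 : ℝ) : ℂ)
      = Complex.I * A1 + Complex.I * A2 + Complex.I * A3 + Complex.I * A4 := by
    push_cast; ring
  rw [e, Complex.exp_add, Complex.exp_add, Complex.exp_add]
  calc ((starRingEnd ℂ) w1 * Complex.exp (Complex.I * A1) * w2)
      * ((starRingEnd ℂ) w2 * Complex.exp (Complex.I * A2) * w3)
      * ((starRingEnd ℂ) w3 * Complex.exp (Complex.I * A3) * w4)
      * ((starRingEnd ℂ) w4 * Complex.exp (Complex.I * A4) * w1)
      = (((starRingEnd ℂ) w1 * w1) * ((starRingEnd ℂ) w2 * w2) * ((starRingEnd ℂ) w3 * w3)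
          * ((starRingEnd ℂ) w4 * w4))
        * (Complex.exp (Complex.I * A1) * Complex.exp (Complex.I * A2)
            * Complex.exp (Complex.I * A3) * Complex.exp (Complex.I * A4)) := by ring
    _ = _ := by
        rw [conj_self, conj_self, conj_self, conj_self]
        push_cast; ring

lemma ofReal_mul_exp_im (r θ : ℝ) :
    (((r : ℝ) : ℂ) * Complex.exp (Complex.I * (θ : ℂ))).im = r * Real.sin θ := by
  rw [mul_comm Complex.I]
  simp [Complex.exp_ofReal_mul_I_im]

lemma abs_zfac (w1 w2 : ℂ) (a : ℝ) :
    ‖(starRingEnd ℂ) w1 * Complex.exp (Complex.I * a) * w2‖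
      = ‖w1‖ * ‖w2‖ := by
  rw [norm_mul, norm_mul, Complex.norm_conj, mul_comm Complex.I, Complex.norm_exp_ofReal_mul_I,
    mul_one]

lemma keych_lemma (z : ℂ) (t s : ℝ) (ht : 0 ≤ t) (hs : 0 ≤ s)
    (hz : t * ‖z‖ ≤ |z.im|) (hz2 : s ≤ ‖z‖) :
    4*(t*s)^2 ≤ (2*z.im)^2 := by
  have h' : t*s ≤ |z.im| := le_trans (mul_le_mul_of_nonneg_left hz2 ht) hz
  have h'' := mul_self_le_mul_self (by positivity) h'
  nlinarith [sq_abs z.im, h'']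

lemma prod_lb (a c s : ℝ) (hs : 0 ≤ s) (h1 : s ≤ a) (h2 : s ≤ c) : s^2 ≤ a*c := by
  nlinarith [mul_le_mul h1 h2 hs (le_trans hs h1)]

lemma numeric_final (sb ε m LR S J : ℝ) (hsb : 0 < sb) (hε : 0 < ε) (hm : 0 ≤ m)
    (hL : 1 ≤ LR) (h1 : 1 ≤ (2*LR+1)^2 * m^2)
    (hJ : 4*((sb/5)*(ε*m)^2)^2 ≤ J) (hsum : J ≤ S) :
    (4 * (sb/5)^2 * ε^4/81) * (LR^4)⁻¹ ≤ S := by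
  have hLpos : (0:ℝ) < LR := by linarith
  have hm4 : (1:ℝ) ≤ (2*LR+1)^4 * m^4 := by nlinarith [h1, sq_nonneg m]
  have h3L : 2*LR+1 ≤ 3*LR := by linarith
  have h81 : (2*LR+1)^4 ≤ 81*LR^4 := by
    calc (2*LR+1)^4 ≤ (3*LR)^4 := pow_le_pow_left₀ (by positivity) h3L 4
      _ = 81*LR^4 := by ring
  have hm4' : (1:ℝ) ≤ 81*LR^4*m^4 := by
    nlinarith [hm4, mul_le_mul_of_nonneg_right h81 (pow_nonneg hm 4)]
  rw [← div_eq_mul_inv, div_le_iff₀ (by positivity : (0:ℝ) < LR^4)]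
  have hp4 : (0:ℝ) ≤ LR^4 := by positivity
  linarith [mul_le_mul_of_nonneg_left hm4' (show (0:ℝ) ≤ 4*(sb/5)^2*ε^4/81 by positivity),
    mul_le_mul_of_nonneg_right hJ hp4, mul_le_mul_of_nonneg_right hsum hp4]

/-- regularity (non-vanishing current) lemma.  For `b ∈ (0, π/2)` and
`E* < 4 - √8` there is `C = C(b,E*) > 0` such that for every `ℓ²`-normalized
eigenfunction `ψ` of `H_{Λ_L}(A)` with eigenvalue `E ∈ [0, E*]`, and every vector
potential whose flux through every plaquette of `Λ_L` lies in `T_b`,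
`Σ_{a ∈ 𝒜_{Λ_L}} |J_ψ(a)|² ≥ C L⁻⁴`. -/
theorem stmt13 (b Estar : ℝ) (hb : b ∈ Set.Ioo 0 (Real.pi / 2))
    (hEstar : Estar < 4 - Real.sqrt 8) :
    ∃ C > 0, ∀ (L : ℕ), 1 ≤ L → ∀ (A : ℤ × ℤ → ℤ × ℤ → ℝ) (ψ : ℤ × ℤ → ℂ) (E : ℝ),
      (∀ x y, edge x y → A x y = -A y x) →
      (∀ p : ℤ × ℤ, squareF p ⊆ box L → flux A p ∈ Tb b) →
      (∀ x ∉ box L, ψ x = 0) →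
      (∀ x ∈ box L, Ham (box L) A ψ x = (E : ℂ) * ψ x) →
      0 ≤ E → E ≤ Estar →
      (∑ x ∈ box L, ‖ψ x‖ ^ 2 = 1) →
      C * (L : ℝ) ^ (-4 : ℤ)
        ≤ ∑ x ∈ box L, ∑ y ∈ (box L).filter (fun y => edge x y), (cur A ψ x y) ^ 2 := by
  obtain ⟨hb0, hbπ⟩ := hb
  have hπ := Real.pi_pos
  have hsin_pos : 0 < Real.sin b := Real.sin_pos_of_pos_of_lt_pi hb0 (by linarith)
  obtain ⟨δ0, hδ0def⟩ : ∃ d : ℝ, d = 4 - Estar := ⟨_, rfl⟩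
  have hsqrt8 : (2.82:ℝ) < Real.sqrt 8 := by
    have h0 : (2.82:ℝ) = Real.sqrt (2.82^2) := by
      rw [Real.sqrt_sq (by norm_num)]
    rw [h0]
    apply Real.sqrt_lt_sqrt (by positivity)
    norm_num
  have hsqrt0 : (0:ℝ) ≤ Real.sqrt 8 := Real.sqrt_nonneg 8
  have hδ0gt : (2.82:ℝ) < δ0 := by rw [hδ0def]; linarith
  have hδ0s : Real.sqrt 8 < δ0 := by rw [hδ0def]; linarith
  have h8 : 8 < δ0^2 := by
    nlinarith [Real.sq_sqrt (show (0:ℝ) ≤ 8 by norm_num), hδ0s, hsqrt0]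
  obtain ⟨ε, hεdef⟩ : ∃ e : ℝ, e = min ((δ0^2-8)/9) (min ((δ0^2-2*δ0-2)/7) ((δ0-2)/2)) := ⟨_, rfl⟩
  have hε : 0 < ε := by
    rw [hεdef]
    refine lt_min (by nlinarith) (lt_min (by nlinarith) (by nlinarith))
  have hεc : ε ≤ (δ0-2)/2 := hεdef ▸ (min_le_right _ _).trans (min_le_right _ _)
  have hε1 : 2*ε ≤ δ0 - 2 := by linarith
  have hεA : 9*ε ≤ δ0^2 - 8 := by
    have h := min_le_left ((δ0^2-8)/9) (min ((δ0^2-2*δ0-2)/7) ((δ0-2)/2))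
    rw [← hεdef] at h
    linarith
  have hεB : 7*ε ≤ δ0^2 - 2*δ0 - 2 := by
    have h := (min_le_right ((δ0^2-8)/9) (min ((δ0^2-2*δ0-2)/7) ((δ0-2)/2))).trans
      (min_le_left ((δ0^2-2*δ0-2)/7) ((δ0-2)/2))
    rw [← hεdef] at h
    linarith
  refine ⟨4 * (Real.sin b / 5)^2 * ε^4 / 81, by positivity, ?_⟩
  intro L hL A ψ E hA hflux hout heig hE0 hEE hnorm
  have hE4 : E ≤ 4 := by linarith
  -- maximizer
  obtain ⟨x0, hx0mem, hmax⟩ := Finset.exists_max_image (box L)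
    (fun q => ‖ψ q‖) ⟨((0:ℤ),(0:ℤ)), by
      simp only [box, Finset.mem_Icc, Prod.mk_le_mk]
      omega⟩
  set m := ‖ψ x0‖ with hmdef
  have hm0 : 0 ≤ m := norm_nonneg _
  have hFle : ∀ q, ‖ψ q‖ ≤ m := by
    intro q
    by_cases hq : q ∈ box L
    · exact hmax q hq
    · rw [hout q hq]; simpa using hm0
  have h1 : (1:ℝ) ≤ ((box L).card : ℝ) * m^2 := by
    rw [← hnorm]
    calc ∑ x ∈ box L, ‖ψ x‖^2 ≤ ∑ _x ∈ box L, m^2 :=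
          Finset.sum_le_sum (fun i _ => by nlinarith [hFle i, norm_nonneg (ψ i)])
      _ = ((box L).card : ℝ) * m^2 := by rw [Finset.sum_const, nsmul_eq_mul]
  have hm : 0 < m := by
    by_contra h
    push_neg at h
    have hm' : m = 0 := le_antisymm h hm0
    rw [hm'] at h1; norm_num at h1
  -- key inequality in F-form
  have key' : ∀ x, ‖ψ x‖ ≠ 0 → (4-E) * ‖ψ x‖ ≤
      ‖ψ (x+(1,0))‖ + ‖ψ (x+(-1,0))‖
        + ‖ψ (x+(0,1))‖ + ‖ψ (x+(0,-1))‖ := by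
    intro x hx
    exact key_ineq L A ψ E hout heig hE4 x (fun h0 => hx (by rw [h0]; simp))
  obtain ⟨p, hp⟩ := exists_square δ0 (4-E) ε m (fun q => ‖ψ q‖) x0
    (by rw [hδ0def]; linarith) (by linarith) hm hFle hmdef.symm key' hε hε1 hεA hεB
  have hc1 : ε*m ≤ ‖ψ p‖ := hp p (by simp [squareF])
  have hc2 : ε*m ≤ ‖ψ (p+(1,0))‖ := hp _ (by simp [squareF])
  have hc3 : ε*m ≤ ‖ψ (p+(0,1))‖ := hp _ (by simp [squareF])
  have hc4 : ε*m ≤ ‖ψ (p+(1,1))‖ := hp _ (by simp [squareF])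
  have hεm : 0 < ε*m := mul_pos hε hm
  have hqbox : ∀ q : ℤ × ℤ, ε*m ≤ ‖ψ q‖ → q ∈ box L := by
    intro q h
    by_contra hq
    rw [hout q hq] at h
    simp at h
    linarith
  have hpbox : p ∈ box L := hqbox _ hc1
  have hp2box : p+(1,0) ∈ box L := hqbox _ hc2
  have hp3box : p+(0,1) ∈ box L := hqbox _ hc3
  have hp4box : p+(1,1) ∈ box L := hqbox _ hc4
  have hsub : squareF p ⊆ box L := by
    intro q hq
    simp only [squareF, Finset.mem_insert, Finset.mem_singleton] at hq
    rcases hq with rfl|rfl|rfl|rfl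
    exacts [hpbox, hp2box, hp3box, hp4box]
  have hfl : ∀ n : ℤ, b ≤ |flux A p - n * Real.pi| := hflux p hsub
  have hsinΦ : Real.sin b ≤ |Real.sin (flux A p)| := sin_lb hb0 hbπ.le hfl
  -- the four oriented edge factors
  obtain ⟨z1, hz1⟩ : ∃ z : ℂ, z = (starRingEnd ℂ) (ψ p)
      * Complex.exp (Complex.I * (A p (p+(1,0)))) * ψ (p+(1,0)) := ⟨_, rfl⟩
  obtain ⟨z2, hz2⟩ : ∃ z : ℂ, z = (starRingEnd ℂ) (ψ (p+(1,0)))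
      * Complex.exp (Complex.I * (A (p+(1,0)) (p+(1,1)))) * ψ (p+(1,1)) := ⟨_, rfl⟩
  obtain ⟨z3, hz3⟩ : ∃ z : ℂ, z = (starRingEnd ℂ) (ψ (p+(1,1)))
      * Complex.exp (Complex.I * (A (p+(1,1)) (p+(0,1)))) * ψ (p+(0,1)) := ⟨_, rfl⟩
  obtain ⟨z4, hz4⟩ : ∃ z : ℂ, z = (starRingEnd ℂ) (ψ (p+(0,1)))
      * Complex.exp (Complex.I * (A (p+(0,1)) p)) * ψ p := ⟨_, rfl⟩
  have habs1 : ‖z1‖ = ‖ψ p‖ * ‖ψ (p+(1,0))‖ := by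
    rw [hz1, abs_zfac]
  have habs2 : ‖z2‖ = ‖ψ (p+(1,0))‖ * ‖ψ (p+(1,1))‖ := by
    rw [hz2, abs_zfac]
  have habs3 : ‖z3‖ = ‖ψ (p+(1,1))‖ * ‖ψ (p+(0,1))‖ := by
    rw [hz3, abs_zfac]
  have habs4 : ‖z4‖ = ‖ψ (p+(0,1))‖ * ‖ψ p‖ := by
    rw [hz4, abs_zfac]
  obtain ⟨R, hRdef⟩ : ∃ r : ℝ, r = ‖ψ p‖^2 * ‖ψ (p+(1,0))‖^2
      * ‖ψ (p+(1,1))‖^2 * ‖ψ (p+(0,1))‖^2 := ⟨_, rfl⟩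
  have hRpos : 0 < R := by
    rw [hRdef]
    have t1 := lt_of_lt_of_le hεm hc1
    have t2 := lt_of_lt_of_le hεm hc2
    have t3 := lt_of_lt_of_le hεm hc4
    have t4 := lt_of_lt_of_le hεm hc3
    positivity
  have hprodz : z1*z2*z3*z4 = ((R:ℝ):ℂ) * Complex.exp (Complex.I * ((flux A p : ℝ):ℂ)) := by
    rw [hz1, hz2, hz3, hz4, prod_cycle, hRdef]
    rfl
  have him : (z1*z2*z3*z4).im = R * Real.sin (flux A p) := by
    rw [hprodz, ofReal_mul_exp_im]
  have habsprod : ‖z1‖ * ‖z2‖ * ‖z3‖ * ‖z4‖ = R := by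
    rw [habs1, habs2, habs3, habs4, hRdef]; ring
  -- one of the four edges carries a large current
  have hdisj : (Real.sin b/5) * ‖z1‖ ≤ |z1.im|
      ∨ (Real.sin b/5) * ‖z2‖ ≤ |z2.im|
      ∨ (Real.sin b/5) * ‖z3‖ ≤ |z3.im|
      ∨ (Real.sin b/5) * ‖z4‖ ≤ |z4.im| := by
    by_contra hno
    push_neg at hno
    obtain ⟨hn1, hn2, hn3, hn4⟩ := hno
    have hbound := im_prod4_le z1 z2 z3 z4 (Real.sin b/5) (by positivity)
      hn1.le hn2.le hn3.le hn4.le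
    rw [habsprod] at hbound
    have hlow : R * Real.sin b ≤ |(z1*z2*z3*z4).im| := by
      rw [him, abs_mul, abs_of_nonneg hRpos.le]
      exact mul_le_mul_of_nonneg_left hsinΦ hRpos.le
    linarith only [hbound, hlow, mul_pos hRpos hsin_pos]
  -- convert to a statement about a single current term
  have hzl1 : (ε*m)^2 ≤ ‖z1‖ := by rw [habs1]; exact prod_lb _ _ _ hεm.le hc1 hc2
  have hzl2 : (ε*m)^2 ≤ ‖z2‖ := by rw [habs2]; exact prod_lb _ _ _ hεm.le hc2 hc4
  have hzl3 : (ε*m)^2 ≤ ‖z3‖ := by rw [habs3]; exact prod_lb _ _ _ hεm.le hc4 hc3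
  have hzl4 : (ε*m)^2 ≤ ‖z4‖ := by rw [habs4]; exact prod_lb _ _ _ hεm.le hc3 hc1
  have hedge1 : edge p (p+(1,0)) := by
    simp [edge, Prod.fst_add, Prod.snd_add]
  have hedge2 : edge (p+(1,0)) (p+(1,1)) := by
    simp [edge, Prod.fst_add, Prod.snd_add]
  have hedge3 : edge (p+(1,1)) (p+(0,1)) := by
    simp [edge, Prod.fst_add, Prod.snd_add]
  have hedge4 : edge (p+(0,1)) p := by
    simp [edge, Prod.fst_add, Prod.snd_add]
  have hbig : ∃ x y, x ∈ box L ∧ y ∈ box L ∧ edge x y ∧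
      4*((Real.sin b/5) * (ε*m)^2)^2 ≤ (cur A ψ x y)^2 := by
    have keych : ∀ (z : ℂ), (Real.sin b/5) * ‖z‖ ≤ |z.im| →
        (ε*m)^2 ≤ ‖z‖ →
        4*((Real.sin b/5) * (ε*m)^2)^2 ≤ (2 * z.im)^2 := fun z hz hz2 =>
      keych_lemma z _ _ (by positivity) (sq_nonneg _) hz hz2
    rcases hdisj with h|h|h|h
    · exact ⟨p, p+(1,0), hpbox, hp2box, hedge1, by
        rw [cur_eq, ← hz1]; exact keych z1 h hzl1⟩
    · exact ⟨p+(1,0), p+(1,1), hp2box, hp4box, hedge2, by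
        rw [cur_eq, ← hz2]; exact keych z2 h hzl2⟩
    · exact ⟨p+(1,1), p+(0,1), hp4box, hp3box, hedge3, by
        rw [cur_eq, ← hz3]; exact keych z3 h hzl3⟩
    · exact ⟨p+(0,1), p, hp3box, hpbox, hedge4, by
        rw [cur_eq, ← hz4]; exact keych z4 h hzl4⟩
  obtain ⟨x', y', hx', hy', he', hJ⟩ := hbig
  have hsum_ge : (cur A ψ x' y')^2
      ≤ ∑ x ∈ box L, ∑ y ∈ (box L).filter (fun y => edge x y), (cur A ψ x y)^2 := by
    have hstep1 : (cur A ψ x' y')^2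
        ≤ ∑ y ∈ (box L).filter (fun y => edge x' y), (cur A ψ x' y)^2 :=
      Finset.single_le_sum (f := fun y => (cur A ψ x' y)^2) (fun i _ => sq_nonneg _)
        (Finset.mem_filter.2 ⟨hy', he'⟩)
    have hstep2 : ∑ y ∈ (box L).filter (fun y => edge x' y), (cur A ψ x' y)^2
        ≤ ∑ x ∈ box L, ∑ y ∈ (box L).filter (fun y => edge x y), (cur A ψ x y)^2 :=
      Finset.single_le_sum
        (f := fun x => ∑ y ∈ (box L).filter (fun y => edge x y), (cur A ψ x y)^2)
        (fun i _ => Finset.sum_nonneg (fun j _ => sq_nonneg _)) hx'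
    linarith
  -- numerics
  have hL1 : (1:ℝ) ≤ (L:ℝ) := by exact_mod_cast hL
  have hcardR : ((box L).card : ℝ) = (2*(L:ℝ)+1)^2 := by
    rw [card_box]; push_cast; ring
  rw [hcardR] at h1
  have hzpow : (L:ℝ)^(-4:ℤ) = (((L:ℝ)^4)⁻¹ : ℝ) := by
    rw [zpow_neg, show ((4:ℤ)) = ((4:ℕ):ℤ) from rfl, zpow_natCast]
  rw [hzpow]
  exact numeric_final (Real.sin b) ε m (L:ℝ) _ _ hsin_pos hε hm0 hL1 h1 hJ hsum_ge
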